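/- Let w be a word over {a<b} that is M-ambiguous with |w|_a ≥ 1. Then w is M-equivalent either to a word starting with a, or to a word of the form b^α a b^β a^γ with α ≥ 1 and β, γ ≥ 0. -/

import Mathlib

open List

/-- Number of occurrences of `v` as a scattered subsequence of `w`. -/
def scount {α : Type*} [DecidableEq α] (w v : List α) : ℕ := w.sublists.count v

/-- The binary ordered alphabet {a < b}. -/
inductive AB | a | b
deriving DecidableEq

open AB

/-- M-equivalence over the ordered alphabet {a < b}. -/
def MEq2 (w w' : List AB) : Prop :=
  scount w [a] = scount w' [a] ∧ scount w [b] = scount w' [b] ∧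
  scount w [a, b] = scount w' [a, b]

def cab : List AB → ℕ
  | [] => 0
  | x :: l => cab l + if x = a then l.count b else 0

lemma beq_inst_eq : (instBEq : BEq (List AB)) = instBEqOfDecidableEq :=
  lawful_beq_subsingleton _ _

lemma scount_eq (w v : List AB) : scount w v = w.sublists'.count v := by
  unfold scount
  exact (sublists_perm_sublists' w).count_eq v

lemma count_nil_sublists' (l : List AB) : l.sublists'.count ([] : List AB) = 1 := by
  induction l with
  | nil => simp [sublists']
  | cons x l ih =>
    rw [sublists'_cons, count_append, ih, count_eq_zero.mpr (by simp)]

lemma count_cons_map (y : AB) (v : List AB) (s : List (List AB)) :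
    count (y :: v) (map (cons y) s) = count v s := by
  exact count_map_of_injective s (cons y) (fun s t h => by simpa using h) v

lemma count_map_ne (y : AB) (v : List AB) (s : List (List AB))
    (h : ∀ t, y :: t ≠ v) : count v (map (cons y) s) = 0 := by
  rw [count_eq_zero]
  simp only [mem_map]
  rintro ⟨t, _, ht⟩
  exact h t ht

lemma scount_single (l : List AB) (x : AB) : scount l [x] = l.count x := by
  rw [scount_eq]
  induction l with
  | nil => simp
  | cons y l ih =>
    rw [sublists'_cons, count_append, ih, count_cons]
    by_cases h : y = x
    · subst h
      rw [show count [y] (map (cons y) l.sublists') = count ([] : List AB) l.sublists' from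
        count_cons_map y [] l.sublists', count_nil_sublists']
      simp
    · rw [count_map_ne y [x] _ (by rintro t ht; injection ht; tauto)]
      simp [Ne.symm h, h]

lemma scount_pair (l : List AB) : scount l [a, b] = cab l := by
  rw [scount_eq]
  induction l with
  | nil => simp [cab]
  | cons y l ih =>
    rw [sublists'_cons, count_append, ih]
    show _ = cab l + if y = a then l.count b else 0
    cases y
    · rw [show count [a, b] (map (cons a) l.sublists') = count [b] l.sublists' from
        count_cons_map a [b] l.sublists']
      rw [← scount_eq, scount_single]
      simp
    · rw [count_map_ne b [a, b] _ (by rintro t ht; injection ht; tauto)]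
      simp

lemma cab_append (u v : List AB) :
    cab (u ++ v) = cab u + cab v + u.count a * v.count b := by
  induction u with
  | nil => simp [cab]
  | cons x u ih =>
    show cab (u ++ v) + _ = (cab u + _) + cab v + _
    rw [ih, show (u.append v) = u ++ v from rfl, count_append, count_cons]
    cases x <;> simp <;> ring

lemma cab_replicate (n : ℕ) (x : AB) : cab (replicate n x) = 0 := by
  induction n with
  | zero => simp [cab]
  | succ k ih =>
    rw [replicate_succ]
    show cab (replicate k x) + _ = 0
    cases x <;> simp [ih, count_replicate]

lemma cab_le (l : List AB) : cab l ≤ l.count a * l.count b := by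
  induction l with
  | nil => simp [cab]
  | cons x l ih =>
    show cab l + _ ≤ _
    cases x <;> simp [count_cons] <;> nlinarith

lemma exists_word (m n j : ℕ) (h : j ≤ m * n) :
    ∃ u : List AB, u.count a = m ∧ u.count b = n ∧ cab u = j := by
  rcases Nat.eq_zero_or_pos n with hn | hn
  · subst hn
    refine ⟨replicate m a, by simp, by simp [count_replicate], ?_⟩
    simp only [Nat.mul_zero, Nat.le_zero] at h
    simp [cab_replicate, h]
  rcases Nat.lt_or_ge (j / n) m with hq | hq
  · refine ⟨replicate (j / n) a ++ replicate (n - j % n) b ++ [a] ++ replicate (j % n) b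
      ++ replicate (m - 1 - j / n) a, ?_, ?_, ?_⟩
    · simp [count_append, count_replicate]; omega
    · have := Nat.mod_lt j hn
      simp only [count_append, count_replicate, count_cons, count_nil, count_singleton]
      simp; omega
    · have h1 := Nat.mod_lt j hn
      have h2 := Nat.div_add_mod j n
      have h3 : n - j % n + j % n = n := by omega
      simp [cab_append, cab_replicate, count_append, count_replicate, cab, h3]
      nlinarith [Nat.div_add_mod j n]
  · have hj : j = m * n := by
      have := Nat.div_mul_le_self j n
      have := Nat.mul_le_mul_right n hq
      omega
    refine ⟨replicate m a ++ replicate n b, by simp [count_replicate], by simp [count_replicate], ?_⟩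
    simp [cab_append, cab_replicate, hj]

theorem stmt_6 (w : List AB)
    (hamb : ∃ w' : List AB, w' ≠ w ∧ MEq2 w w')
    (ha : 1 ≤ scount w [a]) :
    (∃ u : List AB, MEq2 w ([a] ++ u)) ∨
    (∃ α β γ : ℕ, 1 ≤ α ∧
      MEq2 w (replicate α b ++ [a] ++ replicate β b ++ replicate γ a)) := by
  rw [scount_single] at ha
  set m := w.count a with hm
  set n := w.count b with hn
  set j := cab w with hj
  have hle : j ≤ m * n := cab_le w
  rcases Nat.lt_or_ge j n with hlt | hge
  · right
    refine ⟨n - j, j, m - 1, by omega, ?_, ?_, ?_⟩ <;>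
      simp [scount_single, scount_pair, cab_append, cab_replicate, count_append,
        count_replicate, cab, ← hm, ← hn, ← hj] <;> omega
  · left
    have h1 : (m - 1) * n = m * n - n := by
      rw [Nat.sub_mul]; omega
    obtain ⟨u, hua, hub, hucab⟩ := exists_word (m - 1) n (j - n) (by omega)
    refine ⟨u, ?_, ?_, ?_⟩ <;>
      simp [scount_single, scount_pair, cab_append, count_append, cab,
        hua, hub, hucab, ← hm, ← hn, ← hj] <;> omega
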